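/- Let ρ > 0, let h: ℝ → ℝ be a nonnegative 2π-periodic ρ-trigonometrically convex function of class C², and let g: ℝ⁺ → ℝ⁺ be a convex function with g(0) = 0 of class C² on (0,∞). Then, in polar coordinates z = re^{iθ}, the Laplacian of the function v(re^{iθ}) := g((1−r)/r)·h(θ) satisfies Δv = (g''(1/r − 1)/r⁴ + g'(1/r − 1)/r³)·h(θ) + (1/r²)·g(1/r − 1)·h''(θ), and consequently Δv ≥ (1/r²)·(1/(1−r) − ρ²)·g((1−r)/r)·h(θ) for all r ∈ (0,1) and θ ∈ ℝ; in particular v is subharmonic on the annulus {z : max{1/2, 1 − 1/ρ²} < |z| < 1}. -/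

import Mathlib

open MeasureTheory Filter Set

noncomputable section

/-- A function `h : ℝ → ℝ` is `ρ`-trigonometrically convex: for `ρ = 0` this means `h` is
constant; for `ρ ≠ 0` it means that
`h θ ≤ (sin (ρ(θ₂-θ)) h θ₁ + sin (ρ(θ-θ₁)) h θ₂) / sin (ρ(θ₂-θ₁))`
for all `θ ∈ (θ₁, θ₂)` whenever `0 < θ₂ - θ₁ < π/ρ`. -/
def TrigConvex (ρ : ℝ) (h : ℝ → ℝ) : Prop :=
  (ρ = 0 → ∃ c : ℝ, ∀ θ, h θ = c) ∧
  (ρ ≠ 0 → ∀ θ₁ θ₂ θ : ℝ, 0 < θ₂ - θ₁ → θ₂ - θ₁ < Real.pi / ρ → θ₁ < θ → θ < θ₂ →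
    h θ ≤ (Real.sin (ρ * (θ₂ - θ)) * h θ₁ + Real.sin (ρ * (θ - θ₁)) * h θ₂) /
      Real.sin (ρ * (θ₂ - θ₁)))

/-- `u` is subharmonic on the set `U ⊆ ℂ`: `u` is upper semicontinuous on `U` and satisfies
the sub-mean-value inequality on every circle whose closed disk lies in `U`.
(Functions here are real-valued; the paper's value `-∞` is not modelled.) -/
def SubharmonicOn (u : ℂ → ℝ) (U : Set ℂ) : Prop :=
  UpperSemicontinuousOn u U ∧
  ∀ z ∈ U, ∀ r : ℝ, 0 < r → Metric.closedBall z r ⊆ U →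
    u z ≤ (2 * Real.pi)⁻¹ * ∫ θ in (0:ℝ)..(2 * Real.pi), u (circleMap z r θ)

/-- The Laplacian of a (smooth) function `φ : ℂ → ℝ`, as the sum of the second directional
derivatives in the directions `1` and `I`. -/
def lap (φ : ℂ → ℝ) (z : ℂ) : ℝ :=
  fderiv ℝ (fun w => fderiv ℝ φ w 1) z 1 +
    fderiv ℝ (fun w => fderiv ℝ φ w Complex.I) z Complex.I

/-- The pair of positive measures `(μp, μn)` represents the Riesz charge
`μ_M = (1/(2π)) Δ M = μp - μn` of `M` on the open set `U`, in the distributional sense: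
`∫ M Δφ dA = 2π (∫ φ dμp - ∫ φ dμn)` for every smooth `φ` compactly supported in `U`. -/
def IsRieszChargeOn (M : ℂ → ℝ) (U : Set ℂ) (μp μn : MeasureTheory.Measure ℂ) : Prop :=
  ∀ φ : ℂ → ℝ, ContDiff ℝ (⊤ : ℕ∞) φ → HasCompactSupport φ → tsupport φ ⊆ U →
    ∫ z, M z * lap φ z = 2 * Real.pi * ((∫ z, φ z ∂μp) - ∫ z, φ z ∂μn)

/-- `μ` is the Riesz measure `(1/(2π)) Δ u` of `u` on `U`. -/
def IsRieszMeasureOn (u : ℂ → ℝ) (U : Set ℂ) (μ : MeasureTheory.Measure ℂ) : Prop :=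
  IsRieszChargeOn u U μ 0

/-- `M` is δ-subharmonic on `U`: a difference of two subharmonic functions on `U`. -/
def DeltaSubharmonicOn (M : ℂ → ℝ) (U : Set ℂ) : Prop :=
  ∃ M₁ M₂ : ℂ → ℝ, SubharmonicOn M₁ U ∧ SubharmonicOn M₂ U ∧ ∀ z ∈ U, M z = M₁ z - M₂ z

/-- For a positive measure `μ` on `ℂ` and a weight `h ≥ 0`, the measure on `ℝ` whose
distribution function is the radial counting function `r ↦ μ^rad(r; h) = ∫_{|z| ≤ r} h(arg z) dμ`;
it is the pushforward under `z ↦ |z|` of the measure `h (arg z) dμ(z)`.  Integration against it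
is the Stieltjes integral `∫ … dμ^rad(·; h)`. -/
def radMeasure (μ : MeasureTheory.Measure ℂ) (h : ℝ → ℝ) : MeasureTheory.Measure ℝ :=
  MeasureTheory.Measure.map (fun z : ℂ => ‖z‖)
    (μ.withDensity fun z => ENNReal.ofReal (h (Complex.arg z)))

/-- The sequence `Z` has no limit points in `U`: every compact subset of `U` contains only
finitely many terms of `Z`. -/
def NoLimitPointsIn (Z : ℕ → ℂ) (U : Set ℂ) : Prop :=
  ∀ K : Set ℂ, IsCompact K → K ⊆ U → {k : ℕ | Z k ∈ K}.Finite

/-- `f` vanishes on the sequence `Z` in `U`, counting multiplicities: at every `z ∈ U` the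
number of indices `k` with `Z k = z` is at most the order of vanishing of `f` at `z`. -/
def VanishesOn (f : ℂ → ℂ) (Z : ℕ → ℂ) (U : Set ℂ) : Prop :=
  ∀ z ∈ U, ∃ g : ℂ → ℂ, AnalyticAt ℂ g z ∧
    ∀ᶠ w in nhds z, f w = (w - z) ^ (Nat.card {k : ℕ // Z k = z}) * g w


def cE (t : ℝ) : ℂ := Complex.exp (t * Complex.I)

lemma symm_second_diff {f : ℝ → ℝ} (hf : ContDiff ℝ 2 f) (θ : ℝ) :
    Filter.Tendsto (fun ε => (f (θ + ε) + f (θ - ε) - 2 * f θ) / ε ^ 2)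
      (nhdsWithin 0 (Set.Ioi 0)) (nhds (deriv (deriv f) θ)) := by
  have hd1 : Differentiable ℝ f := hf.differentiable two_ne_zero
  have hd2 : Differentiable ℝ (deriv f) := by
    have := (contDiff_succ_iff_deriv (n := 1)).mp (by exact_mod_cast hf)
    exact this.2.2.differentiable one_ne_zero
  -- tendsto of symmetric quotient for deriv f
  have hslope : Tendsto (slope (deriv f) θ) (nhdsWithin θ {θ}ᶜ)
      (nhds (deriv (deriv f) θ)) :=
    hasDerivAt_iff_tendsto_slope.mp (hd2 θ).hasDerivAt
  have hmap1 : Tendsto (fun ε : ℝ => θ + ε) (nhdsWithin 0 (Set.Ioi 0)) (nhdsWithin θ {θ}ᶜ) := by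
    apply tendsto_nhdsWithin_of_tendsto_nhds_of_eventually_within _
    · have : Tendsto (fun ε : ℝ => θ + ε) (nhds 0) (nhds θ) := by
        simpa using (continuous_add_left θ).tendsto (0:ℝ)
      exact this.mono_left nhdsWithin_le_nhds
    · filter_upwards [self_mem_nhdsWithin] with x hx
      simp only [mem_compl_iff, mem_singleton_iff]
      intro hc; nlinarith [mem_Ioi.mp hx]
  have hmap2 : Tendsto (fun ε : ℝ => θ - ε) (nhdsWithin 0 (Set.Ioi 0)) (nhdsWithin θ {θ}ᶜ) := by
    apply tendsto_nhdsWithin_of_tendsto_nhds_of_eventually_within _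
    · have : Tendsto (fun ε : ℝ => θ - ε) (nhds 0) (nhds θ) := by
        simpa using (continuous_sub_left θ).tendsto (0:ℝ)
      exact this.mono_left nhdsWithin_le_nhds
    · filter_upwards [self_mem_nhdsWithin] with x hx
      simp only [mem_compl_iff, mem_singleton_iff]
      intro hc; nlinarith [mem_Ioi.mp hx]
  have hdiv : Tendsto (fun ε => (deriv f (θ + ε) - deriv f (θ - ε)) / (2 * ε))
      (nhdsWithin 0 (Set.Ioi 0)) (nhds (deriv (deriv f) θ)) := by
    have T := ((hslope.comp hmap1).add (hslope.comp hmap2)).div_const 2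
    have : (deriv (deriv f) θ + deriv (deriv f) θ) / 2 = deriv (deriv f) θ := by ring
    rw [this] at T
    apply T.congr'
    filter_upwards [self_mem_nhdsWithin] with ε hε
    have hε' : (ε:ℝ) ≠ 0 := ne_of_gt (mem_Ioi.mp hε)
    simp only [Function.comp, slope_def_field, add_sub_cancel_left, sub_sub_cancel_left]
    rw [div_neg, ← sub_eq_add_neg, div_sub_div_same, div_div, mul_comm]
    congr 1
    ring
  have L := HasDerivAt.lhopital_zero_right_on_Ioo (f := fun ε => f (θ + ε) + f (θ - ε) - 2 * f θ)
    (f' := fun ε => deriv f (θ + ε) - deriv f (θ - ε))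
    (g := fun ε => ε ^ 2) (g' := fun ε => 2 * ε) (a := 0) (b := 1) one_pos
    (fun x _ => by
      have h1 : HasDerivAt (fun ε : ℝ => f (θ + ε)) (deriv f (θ + x)) x := by
        have := ((hd1 (θ + x)).hasDerivAt).comp x ((hasDerivAt_id x).const_add θ)
        simpa [Function.comp_def] using this
      have h2 : HasDerivAt (fun ε : ℝ => f (θ - ε)) (-deriv f (θ - x)) x := by
        have := ((hd1 (θ - x)).hasDerivAt).comp x ((hasDerivAt_id x).neg.const_add θ)
        simpa [Function.comp_def, sub_eq_add_neg] using this
      simpa [sub_eq_add_neg] using (h1.add h2).sub_const (2 * f θ))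
    (fun x _ => by simpa using (hasDerivAt_pow 2 x))
    (fun x hx => mul_ne_zero two_ne_zero (ne_of_gt hx.1))
    (by
      have hc : Continuous fun ε : ℝ => f (θ + ε) + f (θ - ε) - 2 * f θ :=
        ((hd1.continuous.comp (continuous_const.add continuous_id)).add
          (hd1.continuous.comp (continuous_const.sub continuous_id))).sub continuous_const
      have h0 := hc.tendsto (0:ℝ)
      simp only [add_zero, sub_zero] at h0
      have he : f θ + f θ - 2 * f θ = 0 := by ring
      rw [he] at h0
      exact h0.mono_left nhdsWithin_le_nhds)
    (by
      have : Tendsto (fun ε : ℝ => ε ^ 2) (nhds 0) (nhds 0) := by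
        simpa using (continuous_pow 2).tendsto (0:ℝ)
      exact this.mono_left nhdsWithin_le_nhds)
    hdiv
  exact L




lemma trig_second_deriv_nonneg {ρ : ℝ} (hρ : 0 < ρ) {h : ℝ → ℝ}
    (htc : TrigConvex ρ h) (hC2 : ContDiff ℝ 2 h) (θ : ℝ) :
    0 ≤ deriv (deriv h) θ + ρ ^ 2 * h θ := by
  set δ : ℝ := min (Real.pi / (2 * ρ)) 1 with hδ
  have hδpos : 0 < δ := lt_min (by positivity) one_pos
  -- key discrete inequality
  have key : ∀ ε ∈ Ioo (0:ℝ) δ,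
      2 * (Real.cos (ρ * ε) - 1) * h θ ≤ h (θ + ε) + h (θ - ε) - 2 * h θ := by
    intro ε hε
    obtain ⟨hε0, hεδ⟩ := hε
    have hεπ : ε < Real.pi / (2 * ρ) := lt_of_lt_of_le hεδ (min_le_left _ _)
    have hρε : 0 < ρ * ε := by positivity
    have hρεπ2 : ρ * ε < Real.pi / 2 := by
      have h2ρ : (0:ℝ) < 2 * ρ := by positivity
      have := (lt_div_iff₀ h2ρ).mp hεπ
      nlinarith
    have hsin1 : 0 < Real.sin (ρ * ε) :=
      Real.sin_pos_of_pos_of_lt_pi hρε (hρεπ2.trans (by linarith [Real.pi_pos]))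
    have hsin2 : 0 < Real.sin (ρ * (2 * ε)) := by
      apply Real.sin_pos_of_pos_of_lt_pi (by positivity)
      nlinarith [Real.pi_pos]
    have H := htc.2 (ne_of_gt hρ) (θ - ε) (θ + ε) θ (by linarith) (by
        rw [lt_div_iff₀ hρ] at *
        nlinarith) (by linarith) (by linarith)
    have hsimp1 : θ + ε - θ = ε := by ring
    have hsimp2 : θ - (θ - ε) = ε := by ring
    have hsimp3 : θ + ε - (θ - ε) = 2 * ε := by ring
    rw [hsimp1, hsimp2, hsimp3] at H
    rw [le_div_iff₀ hsin2] at H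
    have hdouble : Real.sin (ρ * (2 * ε)) = 2 * Real.sin (ρ * ε) * Real.cos (ρ * ε) := by
      rw [show ρ * (2 * ε) = 2 * (ρ * ε) by ring, Real.sin_two_mul]
    rw [hdouble] at H
    -- H : h θ * (2 sin cos) ≤ sin * h(θ-ε) + sin * h(θ+ε)
    have := (mul_le_mul_iff_right₀ hsin1).mpr (le_refl (1:ℝ))
    nlinarith [hsin1]
  -- limits
  set f : ℝ → ℝ := fun x => h θ * Real.cos (ρ * x) with hfdef
  have hfC2 : ContDiff ℝ 2 f :=
    contDiff_const.mul (Real.contDiff_cos.comp (contDiff_const.mul contDiff_id))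
  have hd1 : ∀ x : ℝ, HasDerivAt f (h θ * (-Real.sin (ρ * x) * ρ)) x := by
    intro x
    have h0 : HasDerivAt (fun x : ℝ => ρ * x) ρ x := by
      simpa using (hasDerivAt_id x).const_mul ρ
    have h1 := (Real.hasDerivAt_cos (ρ * x)).comp x h0
    simpa [mul_comm] using h1.const_mul (h θ)
  have hderivf : deriv f = fun x => h θ * (-Real.sin (ρ * x) * ρ) := by
    funext x; exact (hd1 x).deriv
  have hd2 : HasDerivAt (fun x : ℝ => h θ * (-Real.sin (ρ * x) * ρ))
      (h θ * (-Real.cos (ρ * 0) * ρ * ρ)) 0 := by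
    have h0 : HasDerivAt (fun x : ℝ => ρ * x) ρ 0 := by
      simpa using (hasDerivAt_id (0:ℝ)).const_mul ρ
    have h1 := (Real.hasDerivAt_sin (ρ * 0)).comp 0 h0
    have h2 := (h1.neg.mul_const ρ).const_mul (h θ)
    exact h2.congr_deriv (by ring)
  have hf2 : deriv (deriv f) 0 = -(ρ ^ 2) * h θ := by
    rw [hderivf, hd2.deriv]
    simp [Real.cos_zero]
    ring
  have T1 : Tendsto (fun ε => (f (0 + ε) + f (0 - ε) - 2 * f 0) / ε ^ 2)
      (nhdsWithin 0 (Set.Ioi 0)) (nhds (-(ρ ^ 2) * h θ)) := by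
    rw [← hf2]; exact symm_second_diff hfC2 0
  have T2 := symm_second_diff hC2 θ
  have hle : -(ρ ^ 2) * h θ ≤ deriv (deriv h) θ := by
    apply le_of_tendsto_of_tendsto T1 T2
    filter_upwards [Ioo_mem_nhdsGT_of_mem (Set.mem_Ico.mpr ⟨le_rfl, hδpos⟩)] with ε hε
    have h1 : f (0 + ε) + f (0 - ε) - 2 * f 0 = 2 * (Real.cos (ρ * ε) - 1) * h θ := by
      simp only [hfdef, zero_add, zero_sub, mul_neg, Real.cos_neg, mul_zero, Real.cos_zero]
      ring
    rw [h1]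
    have hε2' : (0:ℝ) ≤ ε ^ 2 := sq_nonneg ε
    gcongr
    exact key ε hε
  linarith


variable {g : ℝ → ℝ}

lemma g_diffAt (hgC2 : ContDiffOn ℝ 2 g (Set.Ioi 0)) {x : ℝ} (hx : 0 < x) :
    DifferentiableAt ℝ g x :=
  ((hgC2.differentiableOn two_ne_zero).differentiableAt (Ioi_mem_nhds hx))

lemma gderiv_diffAt (hgC2 : ContDiffOn ℝ 2 g (Set.Ioi 0)) {x : ℝ} (hx : 0 < x) :
    DifferentiableAt ℝ (deriv g) x := by
  have h1 : ContDiffOn ℝ 1 (deriv g) (Set.Ioi 0) :=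
    hgC2.deriv_of_isOpen isOpen_Ioi (by norm_num)
  exact (h1.differentiableOn one_ne_zero).differentiableAt (Ioi_mem_nhds hx)

lemma g_slope_le (hconv : ConvexOn ℝ (Set.Ici (0:ℝ)) g) (hg0 : g 0 = 0)
    (hgC2 : ContDiffOn ℝ 2 g (Set.Ioi 0)) {x : ℝ} (hx : 0 < x) :
    g x ≤ x * deriv g x := by
  have H := hconv.slope_le_deriv (Set.mem_Ici.mpr le_rfl) (Set.mem_Ici.mpr hx.le) hx
    (g_diffAt hgC2 hx)
  rw [slope_def_field, hg0, sub_zero, sub_zero, div_le_iff₀ hx] at H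
  linarith [H]

lemma g_deriv_mono (hconv : ConvexOn ℝ (Set.Ici (0:ℝ)) g)
    (hgC2 : ContDiffOn ℝ 2 g (Set.Ioi 0)) {y z : ℝ} (hy : 0 < y) (hyz : y < z) :
    deriv g y ≤ deriv g z := by
  have hz : 0 < z := hy.trans hyz
  exact (hconv.deriv_le_slope (Set.mem_Ici.mpr hy.le) (Set.mem_Ici.mpr hz.le) hyz
      (g_diffAt hgC2 hy)).trans
    (hconv.slope_le_deriv (Set.mem_Ici.mpr hy.le) (Set.mem_Ici.mpr hz.le) hyz
      (g_diffAt hgC2 hz))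

lemma g_deriv2_nonneg (hconv : ConvexOn ℝ (Set.Ici (0:ℝ)) g)
    (hgC2 : ContDiffOn ℝ 2 g (Set.Ioi 0)) {x : ℝ} (hx : 0 < x) :
    0 ≤ deriv (deriv g) x := by
  have hdd := gderiv_diffAt hgC2 hx
  have hs := hasDerivAt_iff_tendsto_slope.mp hdd.hasDerivAt
  have hmono : Tendsto (slope (deriv g) x) (nhdsWithin x (Set.Ioi x))
      (nhds (deriv (deriv g) x)) :=
    hs.mono_left (nhdsWithin_mono x fun y hy => ne_of_gt (Set.mem_Ioi.mp hy))
  apply ge_of_tendsto hmono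
  filter_upwards [self_mem_nhdsWithin] with y hy
  have hxy : x < y := Set.mem_Ioi.mp hy
  rw [slope_def_field]
  exact div_nonneg (sub_nonneg.mpr (g_deriv_mono hconv hgC2 hx hxy))
    (sub_nonneg.mpr hxy.le)

lemma g_mono (hconv : ConvexOn ℝ (Set.Ici (0:ℝ)) g) (hg0 : g 0 = 0)
    (hgpos : ∀ x, 0 ≤ x → 0 ≤ g x)
    (hgC2 : ContDiffOn ℝ 2 g (Set.Ioi 0)) {x : ℝ} (hx : 0 < x) :
    0 ≤ deriv g x := by
  have h1 := g_slope_le hconv hg0 hgC2 hx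
  nlinarith [hgpos x hx.le]


variable {g h : ℝ → ℝ}

lemma w_hasDeriv {s : ℝ} (hs : s ≠ 0) :
    HasDerivAt (fun t : ℝ => (1 - t) / t) (-(s ^ 2)⁻¹) s := by
  have h1 : HasDerivAt (fun t : ℝ => t⁻¹ - 1) (-(s ^ 2)⁻¹) s :=
    (hasDerivAt_inv hs).sub_const 1
  apply h1.congr_of_eventuallyEq
  filter_upwards [eventually_ne_nhds hs] with t ht
  field_simp

lemma lemA (hgC2 : ContDiffOn ℝ 2 g (Set.Ioi 0)) {s : ℝ} (hs : 0 < s) (hs1 : s < 1) (c : ℝ) :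
    HasDerivAt (fun t : ℝ => g ((1 - t) / t) * c)
      (deriv g (1 / s - 1) * (-(s ^ 2)⁻¹) * c) s := by
  have hx : (0:ℝ) < 1 / s - 1 := by
    rw [sub_pos, lt_div_iff₀ hs]; linarith
  have hgd : DifferentiableAt ℝ g (1 / s - 1) :=
    (hgC2.differentiableOn two_ne_zero).differentiableAt (Ioi_mem_nhds hx)
  have hweq : (1 - s) / s = 1 / s - 1 := by field_simp
  have hg' : HasDerivAt g (deriv g (1 / s - 1)) ((fun t : ℝ => (1 - t) / t) s) := by
    show HasDerivAt g _ ((1 - s) / s)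
    rw [hweq]; exact hgd.hasDerivAt
  have hcomp := HasDerivAt.comp (h := fun t : ℝ => (1 - t) / t) (h₂ := g) s hg'
    (w_hasDeriv hs.ne')
  simpa [Function.comp] using hcomp.mul_const c

lemma lemInner {s : ℝ} (hs : s ≠ 0) :
    HasDerivAt (fun t : ℝ => 1 / t - 1) (-(s ^ 2)⁻¹) s := by
  have h1 : HasDerivAt (fun t : ℝ => t⁻¹ - 1) (-(s ^ 2)⁻¹) s :=
    (hasDerivAt_inv hs).sub_const 1
  simpa [one_div] using h1

lemma lemB (hgC2 : ContDiffOn ℝ 2 g (Set.Ioi 0)) {r : ℝ} (hr : 0 < r) (hr1 : r < 1) (c : ℝ) :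
    HasDerivAt (fun s : ℝ => deriv g (1 / s - 1) * (-(s ^ 2)⁻¹) * c)
      ((deriv (deriv g) (1 / r - 1) * (r ^ 2)⁻¹ * (r ^ 2)⁻¹
        + deriv g (1 / r - 1) * (2 * r / (r ^ 2) ^ 2)) * c) r := by
  have hx : (0:ℝ) < 1 / r - 1 := by
    rw [sub_pos, lt_div_iff₀ hr]; linarith
  have hgd2 : DifferentiableAt ℝ (deriv g) (1 / r - 1) := by
    have h1 : ContDiffOn ℝ 1 (deriv g) (Set.Ioi 0) :=
      hgC2.deriv_of_isOpen isOpen_Ioi (by norm_num)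
    exact (h1.differentiableOn one_ne_zero).differentiableAt (Ioi_mem_nhds hx)
  have hu : HasDerivAt (fun s : ℝ => deriv g (1 / s - 1))
      (deriv (deriv g) (1 / r - 1) * (-(r ^ 2)⁻¹)) r := by
    have h0 : HasDerivAt (deriv g) (deriv (deriv g) (1 / r - 1))
        ((fun t : ℝ => 1 / t - 1) r) := hgd2.hasDerivAt
    have := HasDerivAt.comp (h := fun t : ℝ => 1 / t - 1) (h₂ := deriv g) r h0
      (lemInner hr.ne')
    simpa [Function.comp_def] using this
  have hv : HasDerivAt (fun s : ℝ => -(s ^ 2)⁻¹) (-(-(2 * r) / (r ^ 2) ^ 2)) r := by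
    have h2 : HasDerivAt (fun s : ℝ => (s ^ 2)) (2 * r) r := by
      simpa using hasDerivAt_pow 2 r
    exact (h2.inv (pow_ne_zero 2 hr.ne')).neg
  have := (hu.mul hv).mul_const c
  exact this.congr_deriv (by ring)

lemma bullet1 (hC2 : ContDiff ℝ 2 h) (hgC2 : ContDiffOn ℝ 2 g (Set.Ioi 0)) :
    ∀ r ∈ Set.Ioo (0 : ℝ) 1, ∀ θ : ℝ,
      deriv (deriv (fun s : ℝ => g ((1 - s) / s) * h θ)) r +
          (1 / r) * deriv (fun s : ℝ => g ((1 - s) / s) * h θ) r +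
          (1 / r ^ 2) * deriv (deriv (fun t : ℝ => g ((1 - r) / r) * h t)) θ
        = (deriv (deriv g) (1 / r - 1) / r ^ 4 + deriv g (1 / r - 1) / r ^ 3) * h θ +
            (1 / r ^ 2) * g (1 / r - 1) * deriv (deriv h) θ := by
  rintro r ⟨hr, hr1⟩ θ
  have hd1 : Differentiable ℝ h := hC2.differentiable two_ne_zero
  -- θ-part
  have hθ2 : deriv (deriv (fun t : ℝ => g ((1 - r) / r) * h t)) θ
      = g ((1 - r) / r) * deriv (deriv h) θ := by
    have e1 : deriv (fun t : ℝ => g ((1 - r) / r) * h t)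
        = fun t => g ((1 - r) / r) * deriv h t := by
      funext t; exact deriv_const_mul _ (hd1 t)
    rw [e1]
    have hd2 : DifferentiableAt ℝ (deriv h) θ := by
      have := (contDiff_succ_iff_deriv (n := 1)).mp (by exact_mod_cast hC2)
      exact (this.2.2.differentiable one_ne_zero) θ
    exact deriv_const_mul _ hd2
  -- first radial derivative
  have hD1 : deriv (fun s : ℝ => g ((1 - s) / s) * h θ) r
      = deriv g (1 / r - 1) * (-(r ^ 2)⁻¹) * h θ := (lemA hgC2 hr hr1 (h θ)).deriv
  -- second radial derivative
  have hev : deriv (fun s : ℝ => g ((1 - s) / s) * h θ)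
      =ᶠ[nhds r] fun s => deriv g (1 / s - 1) * (-(s ^ 2)⁻¹) * h θ := by
    filter_upwards [Ioo_mem_nhds hr hr1] with s hs
    exact (lemA hgC2 hs.1 hs.2 (h θ)).deriv
  have hD2 : deriv (deriv (fun s : ℝ => g ((1 - s) / s) * h θ)) r
      = (deriv (deriv g) (1 / r - 1) * (r ^ 2)⁻¹ * (r ^ 2)⁻¹
        + deriv g (1 / r - 1) * (2 * r / (r ^ 2) ^ 2)) * h θ := by
    rw [hev.deriv_eq]
    exact (lemB hgC2 hr hr1 (h θ)).deriv
  rw [hθ2, hD1, hD2, show (1 - r) / r = 1 / r - 1 by field_simp]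
  have hrne : r ≠ 0 := hr.ne'
  field_simp
  ring




lemma cE_norm (t : ℝ) : ‖cE t‖ = 1 := Complex.norm_exp_ofReal_mul_I t

lemma hasDerivAt_cE (t : ℝ) : HasDerivAt cE (cE t * Complex.I) t := by
  have h1 : HasDerivAt (fun s : ℝ => (s : ℂ) * Complex.I) Complex.I t := by
    have := (hasDerivAt_id t).smul_const Complex.I
    simpa [Complex.real_smul] using this
  unfold cE
  simpa using h1.cexp

lemma ray_hasDerivAt (c : ℂ) (w : ℂ) (s : ℝ) :
    HasDerivAt (fun s : ℝ => c + (s : ℂ) * w) w s := by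
  have := ((hasDerivAt_id s).smul_const w).const_add c
  simpa [Complex.real_smul] using this

lemma circ_hasDerivAt (c : ℂ) (r : ℝ) (θ : ℝ) :
    HasDerivAt (fun t : ℝ => c + (r : ℂ) * cE t) ((r : ℂ) * (cE θ * Complex.I)) θ := by
  exact ((hasDerivAt_cE θ).const_mul (r : ℂ)).const_add c

section
variable {u : ℂ → ℝ} {c z : ℂ} {r θ : ℝ}

lemma L1 (hz : z = c + (r : ℂ) * cE θ) (hu : DifferentiableAt ℝ u z) :
    HasDerivAt (fun s : ℝ => u (c + (s : ℂ) * cE θ)) (fderiv ℝ u z (cE θ)) r := by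
  subst hz
  exact hu.hasFDerivAt.comp_hasDerivAt r (ray_hasDerivAt c (cE θ) r)

lemma L3 (hz : z = c + (r : ℂ) * cE θ) (hu : DifferentiableAt ℝ u z) :
    HasDerivAt (fun t : ℝ => u (c + (r : ℂ) * cE t))
      (fderiv ℝ u z ((r : ℂ) * (cE θ * Complex.I))) θ := by
  subst hz
  exact hu.hasFDerivAt.comp_hasDerivAt θ (circ_hasDerivAt c r θ)

lemma L2 (hz : z = c + (r : ℂ) * cE θ) (hH : DifferentiableAt ℝ (fderiv ℝ u) z) :
    HasDerivAt (fun s : ℝ => (fderiv ℝ u (c + (s : ℂ) * cE θ)) (cE θ))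
      ((fderiv ℝ (fderiv ℝ u) z (cE θ)) (cE θ)) r := by
  subst hz
  have h1 : HasDerivAt (fun s : ℝ => fderiv ℝ u (c + (s : ℂ) * cE θ))
      (fderiv ℝ (fderiv ℝ u) (c + (r : ℂ) * cE θ) (cE θ)) r :=
    hH.hasFDerivAt.comp_hasDerivAt r (ray_hasDerivAt c (cE θ) r)
  have h2 := h1.clm_apply (hasDerivAt_const r (cE θ))
  simpa using h2

lemma L4 (hz : z = c + (r : ℂ) * cE θ) (hH : DifferentiableAt ℝ (fderiv ℝ u) z)
    (hu : DifferentiableAt ℝ u z) :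
    HasDerivAt (fun t : ℝ => (fderiv ℝ u (c + (r : ℂ) * cE t)) (Complex.I * cE t))
      ((fderiv ℝ (fderiv ℝ u) z ((r : ℂ) * (cE θ * Complex.I))) (Complex.I * cE θ)
        + (fderiv ℝ u z) (Complex.I * (cE θ * Complex.I))) θ := by
  subst hz
  have h1 : HasDerivAt (fun t : ℝ => fderiv ℝ u (c + (r : ℂ) * cE t))
      (fderiv ℝ (fderiv ℝ u) (c + (r : ℂ) * cE θ) ((r : ℂ) * (cE θ * Complex.I))) θ :=
    hH.hasFDerivAt.comp_hasDerivAt θ (circ_hasDerivAt c r θ)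
  have h2 : HasDerivAt (fun t : ℝ => Complex.I * cE t) (Complex.I * (cE θ * Complex.I)) θ :=
    (hasDerivAt_cE θ).const_mul Complex.I
  exact h1.clm_apply h2

lemma fderiv_apply_dir (hH : DifferentiableAt ℝ (fderiv ℝ u) z) (v d : ℂ) :
    fderiv ℝ (fun w => fderiv ℝ u w v) z d = (fderiv ℝ (fderiv ℝ u) z d) v := by
  have h := fderiv_clm_apply (c := fderiv ℝ u) (u := fun _ : ℂ => v) hH
    (differentiableAt_const v)
  rw [show (fun w => fderiv ℝ u w v) = fun w => (fderiv ℝ u w) ((fun _ : ℂ => v) w) from rfl, h]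
  simp

lemma lap_eq_H (hH : DifferentiableAt ℝ (fderiv ℝ u) z) :
    lap u z = (fderiv ℝ (fderiv ℝ u) z 1) 1
      + (fderiv ℝ (fderiv ℝ u) z Complex.I) Complex.I := by
  rw [lap, fderiv_apply_dir hH, fderiv_apply_dir hH]

lemma rot' (H : ℂ →L[ℝ] ℂ →L[ℝ] ℝ) (a b : ℝ) (hab : a ^ 2 + b ^ 2 = 1) :
    H ((a : ℂ) + (b : ℂ) * Complex.I) ((a : ℂ) + (b : ℂ) * Complex.I)
      + H (((-b : ℝ) : ℂ) + (a : ℂ) * Complex.I) (((-b : ℝ) : ℂ) + (a : ℂ) * Complex.I)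
    = H 1 1 + H Complex.I Complex.I := by
  have e1 : ∀ x y : ℝ, ((x : ℂ) + (y : ℂ) * Complex.I) = x • (1 : ℂ) + y • Complex.I := by
    intro x y
    simp [Complex.real_smul]
  rw [e1, e1]
  simp only [map_add, _root_.map_smul, ContinuousLinearMap.add_apply,
    ContinuousLinearMap.smul_apply, smul_eq_mul]
  linear_combination ((H 1) 1 + (H Complex.I) Complex.I) * hab

lemma rot (H : ℂ →L[ℝ] ℂ →L[ℝ] ℝ) (θ : ℝ) :
    H (cE θ) (cE θ) + H (Complex.I * cE θ) (Complex.I * cE θ)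
      = H 1 1 + H Complex.I Complex.I := by
  have e1 : cE θ = ((Real.cos θ : ℂ) + (Real.sin θ : ℂ) * Complex.I) := by
    rw [cE, Complex.exp_mul_I, Complex.ofReal_cos, Complex.ofReal_sin]
  have e2 : Complex.I * cE θ = (((-Real.sin θ : ℝ) : ℂ) + (Real.cos θ : ℂ) * Complex.I) := by
    rw [e1]
    push_cast
    ring_nf
    rw [Complex.I_sq]
    ring
  rw [e2, e1]
  exact rot' H (Real.cos θ) (Real.sin θ) (by nlinarith [Real.sin_sq_add_cos_sq θ])

end





lemma continuous_cE : Continuous cE :=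
  Complex.continuous_exp.comp (Complex.continuous_ofReal.mul continuous_const)

theorem submean {U : Set ℂ} (hU : IsOpen U) {u : ℂ → ℝ} (hu : ContDiffOn ℝ 2 u U)
    (hlap : ∀ z ∈ U, 0 ≤ lap u z) {c : ℂ} {R : ℝ} (hR : 0 < R)
    (hball : Metric.closedBall c R ⊆ U) :
    u c ≤ (2 * Real.pi)⁻¹ * ∫ θ in (0:ℝ)..(2 * Real.pi), u (circleMap c R θ) := by
  obtain ⟨δ, hδpos, hδsub⟩ :=
    (isCompact_closedBall c R).exists_cthickening_subset_open hU hball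
  set R₂ := R + δ with hR₂def
  have hRR₂ : R < R₂ := by simp [hR₂def]; linarith
  have hR₂pos : 0 < R₂ := hR.trans hRR₂
  have hball₂ : Metric.closedBall c R₂ ⊆ U := by
    rw [hR₂def, add_comm R δ, ← cthickening_closedBall hδpos.le hR.le c]
    exact hδsub
  have hptK : ∀ (x : ℝ), |x| ≤ R₂ → ∀ t : ℝ, c + (x : ℂ) * cE t ∈ Metric.closedBall c R₂ := by
    intro x hx t
    rw [Metric.mem_closedBall, dist_eq_norm, add_sub_cancel_left]
    rw [norm_mul, Complex.norm_real, Real.norm_eq_abs, cE_norm, mul_one]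
    exact hx
  have hptU : ∀ (x : ℝ), |x| ≤ R₂ → ∀ t : ℝ, c + (x : ℂ) * cE t ∈ U :=
    fun x hx t => hball₂ (hptK x hx t)
  -- differentiability and continuity of the derivatives
  have hC1 : ContDiffOn ℝ 1 (fderiv ℝ u) U := hu.fderiv_of_isOpen hU (by norm_num)
  have contu : ContinuousOn u U := hu.continuousOn
  have contd1 : ContinuousOn (fderiv ℝ u) U :=
    hu.continuousOn_fderiv_of_isOpen hU (by norm_num)
  have contH : ContinuousOn (fderiv ℝ (fderiv ℝ u)) U :=
    hC1.continuousOn_fderiv_of_isOpen hU le_rfl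
  have hudiff : ∀ z ∈ U, DifferentiableAt ℝ u z := fun z hz =>
    (hu.differentiableOn two_ne_zero).differentiableAt (hU.mem_nhds hz)
  have hHdiff : ∀ z ∈ U, DifferentiableAt ℝ (fderiv ℝ u) z := fun z hz =>
    (hC1.differentiableOn one_ne_zero).differentiableAt (hU.mem_nhds hz)
  -- bounds
  obtain ⟨M₁, hM₁⟩ := (isCompact_closedBall c R₂).exists_bound_of_continuousOn
    (contd1.mono hball₂)
  obtain ⟨M₂, hM₂⟩ := (isCompact_closedBall c R₂).exists_bound_of_continuousOn
    (E := ℂ →L[ℝ] ℂ →L[ℝ] ℝ) (contH.mono hball₂)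
  -- path continuity
  have hpath : ∀ x : ℝ, Continuous (fun t : ℝ => c + (x : ℂ) * cE t) :=
    fun x => continuous_const.add (continuous_const.mul continuous_cE)
  have hpath2 : Continuous (fun p : ℝ → ℂ => p) := continuous_id
  -- integrand continuity
  have hcontA : ∀ x : ℝ, |x| ≤ R₂ → Continuous (fun t : ℝ => u (c + (x : ℂ) * cE t)) :=
    fun x hx => contu.comp_continuous (hpath x) (fun t => hptU x hx t)
  have hcontfd : ∀ x : ℝ, |x| ≤ R₂ →
      Continuous (fun t : ℝ => fderiv ℝ u (c + (x : ℂ) * cE t)) :=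
    fun x hx => contd1.comp_continuous (hpath x) (fun t => hptU x hx t)
  have hcontH : ∀ x : ℝ, |x| ≤ R₂ →
      Continuous (fun t : ℝ => fderiv ℝ (fderiv ℝ u) (c + (x : ℂ) * cE t)) :=
    fun x hx => contH.comp_continuous (hpath x) (fun t => hptU x hx t)
  have hcontB : ∀ x : ℝ, |x| ≤ R₂ →
      Continuous (fun t : ℝ => (fderiv ℝ u (c + (x : ℂ) * cE t)) (cE t)) :=
    fun x hx => (hcontfd x hx).clm_apply continuous_cE
  have hcontC : ∀ x : ℝ, |x| ≤ R₂ →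
      Continuous (fun t : ℝ => (fderiv ℝ (fderiv ℝ u) (c + (x : ℂ) * cE t) (cE t)) (cE t)) :=
    fun x hx => ((hcontH x hx).clm_apply continuous_cE).clm_apply continuous_cE
  have hcontIcE : ∀ x : ℝ, |x| ≤ R₂ →
      Continuous (fun t : ℝ =>
        (fderiv ℝ (fderiv ℝ u) (c + (x : ℂ) * cE t) (Complex.I * cE t)) (Complex.I * cE t)) :=
    fun x hx => ((hcontH x hx).clm_apply (continuous_const.mul continuous_cE)).clm_apply
      (continuous_const.mul continuous_cE)
  have hcontlap : ∀ x : ℝ, |x| ≤ R₂ →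
      Continuous (fun t : ℝ => lap u (c + (x : ℂ) * cE t)) := by
    intro x hx
    have h1 : (fun t : ℝ => lap u (c + (x : ℂ) * cE t))
        = fun t => (fderiv ℝ (fderiv ℝ u) (c + (x : ℂ) * cE t) 1) 1
          + (fderiv ℝ (fderiv ℝ u) (c + (x : ℂ) * cE t) Complex.I) Complex.I := by
      funext t
      exact lap_eq_H (hHdiff _ (hptU x hx t))
    rw [h1]
    exact (((hcontH x hx).clm_apply continuous_const).clm_apply continuous_const).add
      (((hcontH x hx).clm_apply continuous_const).clm_apply continuous_const)
  -- the three radial functions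
  set A : ℝ → ℝ := fun x => ∫ t in (0:ℝ)..(2 * Real.pi), u (c + (x : ℂ) * cE t) with hAdef
  set B : ℝ → ℝ := fun x =>
    ∫ t in (0:ℝ)..(2 * Real.pi), (fderiv ℝ u (c + (x : ℂ) * cE t)) (cE t) with hBdef
  set C2 : ℝ → ℝ := fun x =>
    ∫ t in (0:ℝ)..(2 * Real.pi),
      (fderiv ℝ (fderiv ℝ u) (c + (x : ℂ) * cE t) (cE t)) (cE t) with hC2def
  set IL : ℝ → ℝ := fun x =>
    ∫ t in (0:ℝ)..(2 * Real.pi), lap u (c + (x : ℂ) * cE t) with hILdef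
  -- ball membership helper
  have hballmem : ∀ r : ℝ, |r| < R₂ → ∀ x ∈ Metric.ball r ((R₂ - |r|)/2), |x| ≤ R₂ := by
    intro r hr x hx
    rw [Metric.mem_ball, Real.dist_eq] at hx
    have := abs_sub_abs_le_abs_sub x r
    linarith [abs_nonneg x, abs_nonneg r]
  -- derivative of A
  have hA : ∀ r : ℝ, |r| < R₂ → HasDerivAt A (B r) r := by
    intro r hr
    have hε : 0 < (R₂ - |r|)/2 := by linarith
    have key := intervalIntegral.hasDerivAt_integral_of_dominated_loc_of_deriv_le
      (F := fun (x : ℝ) t => u (c + (x : ℂ) * cE t))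
      (F' := fun (x : ℝ) t => (fderiv ℝ u (c + (x : ℂ) * cE t)) (cE t))
      (μ := volume) (a := 0) (b := 2 * Real.pi) (x₀ := r)
      (bound := fun _ => M₁) (Metric.ball_mem_nhds r hε)
      (by
        filter_upwards [Metric.ball_mem_nhds r hε] with x hx
        exact ((hcontA x (hballmem r hr x hx)).aestronglyMeasurable).restrict)
      ((hcontA r hr.le).intervalIntegrable 0 (2 * Real.pi))
      (((hcontB r hr.le).aestronglyMeasurable).restrict)
      (ae_of_all _ (by
        intro t _ x hx
        calc ‖(fderiv ℝ u (c + (x : ℂ) * cE t)) (cE t)‖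
            ≤ ‖fderiv ℝ u (c + (x : ℂ) * cE t)‖ * ‖cE t‖ :=
              ContinuousLinearMap.le_opNorm _ _
          _ ≤ M₁ := by
              rw [cE_norm, mul_one]
              exact hM₁ _ (hptK x (hballmem r hr x hx) t)))
      intervalIntegrable_const
      (ae_of_all _ (fun t _ x hx =>
        L1 rfl (hudiff _ (hptU x (hballmem r hr x hx) t))))
    exact key.2
  -- derivative of B
  have hB : ∀ r : ℝ, |r| < R₂ → HasDerivAt B (C2 r) r := by
    intro r hr
    have hε : 0 < (R₂ - |r|)/2 := by linarith
    have key := intervalIntegral.hasDerivAt_integral_of_dominated_loc_of_deriv_le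
      (F := fun (x : ℝ) t => (fderiv ℝ u (c + (x : ℂ) * cE t)) (cE t))
      (F' := fun (x : ℝ) t => (fderiv ℝ (fderiv ℝ u) (c + (x : ℂ) * cE t) (cE t)) (cE t))
      (μ := volume) (a := 0) (b := 2 * Real.pi) (x₀ := r)
      (bound := fun _ => M₂) (Metric.ball_mem_nhds r hε)
      (by
        filter_upwards [Metric.ball_mem_nhds r hε] with x hx
        exact ((hcontB x (hballmem r hr x hx)).aestronglyMeasurable).restrict)
      ((hcontB r hr.le).intervalIntegrable 0 (2 * Real.pi))
      (((hcontC r hr.le).aestronglyMeasurable).restrict)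
      (ae_of_all _ (by
        intro t _ x hx
        calc ‖(fderiv ℝ (fderiv ℝ u) (c + (x : ℂ) * cE t) (cE t)) (cE t)‖
            ≤ ‖fderiv ℝ (fderiv ℝ u) (c + (x : ℂ) * cE t) (cE t)‖ * ‖cE t‖ :=
              ContinuousLinearMap.le_opNorm _ _
          _ ≤ ‖fderiv ℝ (fderiv ℝ u) (c + (x : ℂ) * cE t)‖ * ‖cE t‖ * ‖cE t‖ := by
              apply mul_le_mul_of_nonneg_right _ (norm_nonneg _)
              exact ContinuousLinearMap.le_opNorm _ _
          _ ≤ M₂ := by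
              rw [cE_norm, mul_one, mul_one]
              exact hM₂ _ (hptK x (hballmem r hr x hx) t)))
      intervalIntegrable_const
      (ae_of_all _ (fun t _ x hx =>
        L2 rfl (hHdiff _ (hptU x (hballmem r hr x hx) t))))
    exact key.2
  -- A 0 and B 0
  have hA0 : A 0 = 2 * Real.pi * u c := by
    rw [hAdef]
    simp
  have hIcE : (∫ t in (0:ℝ)..(2 * Real.pi), cE t) = 0 := by
    have hder : ∀ t ∈ uIcc (0:ℝ) (2 * Real.pi),
        HasDerivAt (fun s : ℝ => cE s * (-Complex.I)) (cE t) t := by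
      intro t _
      have h := (hasDerivAt_cE t).mul_const (-Complex.I)
      have e : cE t * Complex.I * -Complex.I = cE t := by
        rw [mul_assoc, mul_neg, Complex.I_mul_I]
        simp
      rw [e] at h
      exact h
    rw [intervalIntegral.integral_eq_sub_of_hasDerivAt hder
      (continuous_cE.intervalIntegrable 0 (2 * Real.pi))]
    have h2 : cE (2 * Real.pi) = 1 := by
      have e : ((2 * Real.pi : ℝ) : ℂ) * Complex.I = 2 * (Real.pi : ℂ) * Complex.I := by
        push_cast; ring
      rw [cE, e, Complex.exp_two_pi_mul_I]
    have h0 : cE 0 = 1 := by simp [cE]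
    rw [h2, h0]
    ring
  have hB0 : B 0 = 0 := by
    rw [hBdef]
    simp only [Complex.ofReal_zero, zero_mul, add_zero]
    rw [ContinuousLinearMap.intervalIntegral_comp_comm _
      (continuous_cE.intervalIntegrable 0 (2 * Real.pi))]
    rw [hIcE, map_zero]
  -- FTC identity : r * JH r = B r  (for 0 < r < R₂)
  have hJH : ∀ r : ℝ, 0 < r → r < R₂ →
      (∫ t in (0:ℝ)..(2 * Real.pi),
        (r * (fderiv ℝ (fderiv ℝ u) (c + (r : ℂ) * cE t) (Complex.I * cE t))
            (Complex.I * cE t) - (fderiv ℝ u (c + (r : ℂ) * cE t)) (cE t))) = 0 := by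
    intro r hr0 hrR
    have hrabs : |r| ≤ R₂ := by rw [abs_of_pos hr0]; exact hrR.le
    have hder : ∀ t ∈ uIcc (0:ℝ) (2 * Real.pi),
        HasDerivAt (fun t : ℝ => (fderiv ℝ u (c + (r : ℂ) * cE t)) (Complex.I * cE t))
          (r * (fderiv ℝ (fderiv ℝ u) (c + (r : ℂ) * cE t) (Complex.I * cE t))
            (Complex.I * cE t) - (fderiv ℝ u (c + (r : ℂ) * cE t)) (cE t)) t := by
      intro t _
      have h := L4 (u := u) (c := c) (r := r) (θ := t) rfl
        (hHdiff _ (hptU r hrabs t)) (hudiff _ (hptU r hrabs t))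
      have e1 : ((r : ℂ) * (cE t * Complex.I)) = r • (Complex.I * cE t) := by
        rw [Complex.real_smul]; ring
      have e2 : Complex.I * (cE t * Complex.I) = -cE t := by
        rw [mul_comm (cE t) Complex.I, ← mul_assoc, Complex.I_mul_I]; ring
      rw [e1, e2, _root_.map_smul, map_neg] at h
      simpa [ContinuousLinearMap.smul_apply, smul_eq_mul, sub_eq_add_neg] using h
    have hcont' : Continuous (fun t : ℝ =>
        r * (fderiv ℝ (fderiv ℝ u) (c + (r : ℂ) * cE t) (Complex.I * cE t))
          (Complex.I * cE t) - (fderiv ℝ u (c + (r : ℂ) * cE t)) (cE t)) :=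
      (continuous_const.mul (hcontIcE r hrabs)).sub (hcontB r hrabs)
    rw [intervalIntegral.integral_eq_sub_of_hasDerivAt hder
      (hcont'.intervalIntegrable 0 (2 * Real.pi))]
    have h2π : cE (2 * Real.pi) = cE 0 := by
      have h2 : cE (2 * Real.pi) = 1 := by
        have e : ((2 * Real.pi : ℝ) : ℂ) * Complex.I = 2 * (Real.pi : ℂ) * Complex.I := by
          push_cast; ring
        rw [cE, e, Complex.exp_two_pi_mul_I]
      rw [h2]; simp [cE]
    rw [h2π]
    ring
  -- key: B r + r * C2 r = r * IL r on (0, R₂)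
  have hkey : ∀ r : ℝ, 0 < r → r < R₂ → B r + r * C2 r = r * IL r := by
    intro r hr0 hrR
    have hrabs : |r| ≤ R₂ := by rw [abs_of_pos hr0]; exact hrR.le
    -- pointwise : H cE cE = lap - H IcE IcE
    have hptw : ∀ t : ℝ,
        (fderiv ℝ (fderiv ℝ u) (c + (r : ℂ) * cE t) (cE t)) (cE t)
          = lap u (c + (r : ℂ) * cE t)
            - (fderiv ℝ (fderiv ℝ u) (c + (r : ℂ) * cE t) (Complex.I * cE t))
              (Complex.I * cE t) := by
      intro t
      have h1 := rot (fderiv ℝ (fderiv ℝ u) (c + (r : ℂ) * cE t)) t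
      have h2 := lap_eq_H (hHdiff _ (hptU r hrabs t))
      rw [← h2] at h1
      linarith
    have hC2eq : C2 r = IL r - ∫ t in (0:ℝ)..(2 * Real.pi),
        (fderiv ℝ (fderiv ℝ u) (c + (r : ℂ) * cE t) (Complex.I * cE t))
          (Complex.I * cE t) := by
      rw [hC2def]
      simp only
      rw [intervalIntegral.integral_congr (g := fun t =>
        lap u (c + (r : ℂ) * cE t)
          - (fderiv ℝ (fderiv ℝ u) (c + (r : ℂ) * cE t) (Complex.I * cE t))
            (Complex.I * cE t)) (fun t _ => hptw t)]
      rw [intervalIntegral.integral_sub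
        ((hcontlap r hrabs).intervalIntegrable 0 (2 * Real.pi))
        ((hcontIcE r hrabs).intervalIntegrable 0 (2 * Real.pi))]
    have hsplit := hJH r hr0 hrR
    rw [intervalIntegral.integral_sub
      (((hcontIcE r hrabs).intervalIntegrable 0 (2 * Real.pi)).const_mul r)
      ((hcontB r hrabs).intervalIntegrable 0 (2 * Real.pi))] at hsplit
    rw [intervalIntegral.integral_const_mul] at hsplit
    have hBr : B r = r * ∫ t in (0:ℝ)..(2 * Real.pi),
        (fderiv ℝ (fderiv ℝ u) (c + (r : ℂ) * cE t) (Complex.I * cE t))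
          (Complex.I * cE t) := by
      rw [hBdef]; simp only; linarith [hsplit]
    rw [hC2eq]
    rw [hBr]
    ring
  -- IL nonneg
  have hILnonneg : ∀ r : ℝ, |r| ≤ R₂ → 0 ≤ IL r := by
    intro r hrabs
    rw [hILdef]
    apply intervalIntegral.integral_nonneg (by positivity)
    intro t _
    exact hlap _ (hptU r hrabs t)
  -- φ := fun x => x * B x is monotone on [0, R]
  have hφder : ∀ r : ℝ, |r| < R₂ →
      HasDerivAt (fun x => x * B x) (B r + r * C2 r) r := by
    intro r hr
    have h := (hasDerivAt_id r).mul (hB r hr)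
    exact (by simpa using h : HasDerivAt (id * B) (B r + r * C2 r) r)
  have hBpos : ∀ r : ℝ, 0 < r → r ≤ R → 0 ≤ B r := by
    intro r hr0 hrR
    have hmono : MonotoneOn (fun x => x * B x) (Icc 0 R) := by
      apply monotoneOn_of_deriv_nonneg (convex_Icc 0 R)
      · intro x hx
        have hxabs : |x| < R₂ := by
          rw [abs_of_nonneg hx.1]; exact lt_of_le_of_lt hx.2 hRR₂
        exact (hφder x hxabs).continuousAt.continuousWithinAt
      · intro x hx
        rw [interior_Icc] at hx
        have hxabs : |x| < R₂ := by
          rw [abs_of_pos hx.1]; exact lt_of_lt_of_le hx.2 hRR₂.le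
        exact (hφder x hxabs).differentiableAt.differentiableWithinAt
      · intro x hx
        rw [interior_Icc] at hx
        have hxabs : |x| < R₂ := by
          rw [abs_of_pos hx.1]; exact lt_of_lt_of_le hx.2 hRR₂.le
        rw [(hφder x hxabs).deriv]
        rw [hkey x hx.1 (lt_of_lt_of_le hx.2 hRR₂.le)]
        exact mul_nonneg hx.1.le (hILnonneg x hxabs.le)
    have h0 : (fun x => x * B x) 0 ≤ (fun x => x * B x) r :=
      hmono (by constructor <;> [exact le_rfl; exact hR.le]) ⟨hr0.le, hrR⟩ hr0.le
    simp only [zero_mul] at h0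
    exact nonneg_of_mul_nonneg_right (by linarith) hr0
  -- A is monotone on [0, R]
  have hAmono : MonotoneOn A (Icc 0 R) := by
    apply monotoneOn_of_deriv_nonneg (convex_Icc 0 R)
    · intro x hx
      have hxabs : |x| < R₂ := by
        rw [abs_of_nonneg hx.1]; exact lt_of_le_of_lt hx.2 hRR₂
      exact (hA x hxabs).continuousAt.continuousWithinAt
    · intro x hx
      rw [interior_Icc] at hx
      have hxabs : |x| < R₂ := by
        rw [abs_of_pos hx.1]; exact lt_of_lt_of_le hx.2 hRR₂.le
      exact (hA x hxabs).differentiableAt.differentiableWithinAt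
    · intro x hx
      rw [interior_Icc] at hx
      have hxabs : |x| < R₂ := by
        rw [abs_of_pos hx.1]; exact lt_of_lt_of_le hx.2 hRR₂.le
      rw [(hA x hxabs).deriv]
      exact hBpos x hx.1 hx.2.le
  have hfin : A 0 ≤ A R := hAmono ⟨le_rfl, hR.le⟩ ⟨hR.le, le_rfl⟩ hR.le
  rw [hA0] at hfin
  have h2πpos : (0:ℝ) < 2 * Real.pi := Real.two_pi_pos
  have hgoal : u c ≤ (2 * Real.pi)⁻¹ * A R := by
    rw [le_inv_mul_iff₀ h2πpos] at *
    linarith [hfin]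
  have hAR : A R = ∫ θ in (0:ℝ)..(2 * Real.pi), u (circleMap c R θ) := by
    rw [hAdef]
    simp only [circleMap, cE]
  rw [← hAR]
  exact hgoal



section
variable {h g : ℝ → ℝ}

lemma habsC {z₀ : ℂ} (hz : z₀ ≠ 0) :
    ContDiffAt ℝ 2 (fun z : ℂ => ‖z‖) z₀ := by
  have h1 : (fun z : ℂ => ‖z‖)
      = fun z : ℂ => Real.sqrt (Complex.normSq z) := by
    funext z; exact Complex.norm_def z
  rw [h1]
  have hns : ContDiff ℝ 2 (fun z : ℂ => Complex.normSq z) := by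
    have : (fun z : ℂ => Complex.normSq z) = fun z : ℂ =>
        Complex.reCLM z * Complex.reCLM z + Complex.imCLM z * Complex.imCLM z := by
      funext z; simp [Complex.normSq_apply]
    rw [this]
    exact (Complex.reCLM.contDiff.mul Complex.reCLM.contDiff).add
      (Complex.imCLM.contDiff.mul Complex.imCLM.contDiff)
  exact hns.contDiffAt.sqrt (by simpa using hz)

lemma hargC (hper : Function.Periodic h (2 * Real.pi)) (hC2 : ContDiff ℝ 2 h)
    {z₀ : ℂ} (hz : z₀ ≠ 0) :
    ContDiffAt ℝ 2 (fun z : ℂ => h (Complex.arg z)) z₀ := by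
  -- the slit-plane case, with a shift
  have hslit : ∀ (s : ℝ) (w : ℂ), w ∈ Complex.slitPlane →
      ContDiffAt ℝ 2 (fun z : ℂ => h (Complex.arg z + s)) w := by
    intro s w hw
    have h1 : (fun z : ℂ => h (Complex.arg z + s))
        = (fun y : ℝ => h (y + s)) ∘ (fun z : ℂ => (Complex.log z).im) := by
      funext z; simp [Function.comp, Complex.log_im]
    rw [h1]
    have houter : ContDiff ℝ 2 (fun y : ℝ => h (y + s)) :=
      hC2.comp (contDiff_id.add contDiff_const)
    have hinner : ContDiffAt ℝ 2 (fun z : ℂ => (Complex.log z).im) w := by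
      have hlog : ContDiffAt ℝ 2 Complex.log w :=
        (Complex.contDiffAt_log hw).restrict_scalars ℝ
      exact (Complex.imCLM.contDiff.contDiffAt).comp w hlog
    exact houter.contDiffAt.comp w hinner
  by_cases hsl : z₀ ∈ Complex.slitPlane
  · have := hslit 0 z₀ hsl
    simpa using this
  · -- z₀ is a negative real
    have hre : z₀.re < 0 := by
      rcases Complex.mem_slitPlane_iff.not.mp hsl with h1
      push_neg at h1
      rcases lt_trichotomy z₀.re 0 with h2 | h2 | h2
      · exact h2
      · exact absurd (Complex.ext (by simp [h2]) (by simp [h1.2])) hz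
      · linarith [h1.1]
    have hneg : -z₀ ∈ Complex.slitPlane := by
      rw [Complex.mem_slitPlane_iff]
      left; simpa using hre
    have hC : ContDiffAt ℝ 2 (fun z : ℂ => h (Complex.arg (-z) + Real.pi)) z₀ := by
      have := (hslit Real.pi (-z₀) hneg).comp z₀ (contDiff_neg.contDiffAt (x := z₀))
      simpa [Function.comp_def] using this
    apply hC.congr_of_eventuallyEq
    have hopen : IsOpen {z : ℂ | z.re < 0} := by
      have : {z : ℂ | z.re < 0} = Complex.reCLM ⁻¹' Iio 0 := rfl
      exact isOpen_Iio.preimage Complex.reCLM.continuous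
    filter_upwards [hopen.mem_nhds hre] with z hzre
    show h (Complex.arg z) = h (Complex.arg (-z) + Real.pi)
    rcases lt_trichotomy z.im 0 with him | him | him
    · rw [Complex.arg_neg_eq_arg_add_pi_of_im_neg him]
      have := hper (Complex.arg z)
      rw [show Complex.arg z + Real.pi + Real.pi = Complex.arg z + 2 * Real.pi by ring]
      rw [this]
    · have hzre' : z.re < 0 := hzre
      have h1 : Complex.arg z = Real.pi := by
        rw [Complex.arg_eq_pi_iff]; exact ⟨hzre', him⟩
      have h2 : Complex.arg (-z) = 0 := by
        rw [Complex.arg_eq_zero_iff]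
        constructor
        · simp; linarith
        · simp [him]
      rw [h1, h2, zero_add]
    · rw [Complex.arg_neg_eq_arg_sub_pi_of_im_pos him]
      ring_nf
  
lemma harg_eq (hper : Function.Periodic h (2 * Real.pi)) {r : ℝ} (hr : 0 < r) (t : ℝ) :
    h (Complex.arg ((r : ℂ) * cE t)) = h t := by
  rw [cE, Complex.arg_real_mul _ hr, Complex.arg_exp_mul_I]
  rw [← self_sub_toIocDiv_zsmul (mul_pos two_pos Real.pi_pos) (-Real.pi) t]
  set k := toIocDiv (mul_pos two_pos Real.pi_pos) (-Real.pi) t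
  rw [zsmul_eq_mul]
  exact hper.sub_int_mul_eq k

lemma vContDiffAt (hper : Function.Periodic h (2 * Real.pi)) (hC2 : ContDiff ℝ 2 h)
    (hgC2 : ContDiffOn ℝ 2 g (Set.Ioi (0 : ℝ))) {z₀ : ℂ}
    (h0 : 0 < ‖z₀‖) (h1 : ‖z₀‖ < 1) :
    ContDiffAt ℝ 2
      (fun z : ℂ => g ((1 - ‖z‖) / ‖z‖) * h (Complex.arg z)) z₀ := by
  have hz : z₀ ≠ 0 := by
    intro hc; rw [hc] at h0; simp at h0
  have habs := habsC hz
  have hratio : ContDiffAt ℝ 2 (fun z : ℂ => (1 - ‖z‖) / ‖z‖) z₀ :=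
    (contDiffAt_const.sub habs).div habs (ne_of_gt h0)
  have hx : (1 - ‖z₀‖) / ‖z₀‖ ∈ Set.Ioi (0:ℝ) := by
    rw [Set.mem_Ioi]
    apply div_pos (by linarith) h0
  have hgat : ContDiffAt ℝ 2 g ((1 - ‖z₀‖) / ‖z₀‖) :=
    hgC2.contDiffAt (Ioi_mem_nhds hx)
  exact (hgat.comp z₀ hratio).mul (hargC hper hC2 hz)
end





lemma lap_v {h g : ℝ → ℝ} (hper : Function.Periodic h (2 * Real.pi))
    (hC2 : ContDiff ℝ 2 h) (hgC2 : ContDiffOn ℝ 2 g (Set.Ioi (0 : ℝ))) {z : ℂ}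
    (h0 : 0 < ‖z‖) (h1 : ‖z‖ < 1) :
    lap (fun w : ℂ => g ((1 - ‖w‖) / ‖w‖) * h (Complex.arg w)) z
      = deriv (deriv (fun s : ℝ => g ((1 - s) / s) * h (Complex.arg z))) (‖z‖) +
        (1 / ‖z‖) *
          deriv (fun s : ℝ => g ((1 - s) / s) * h (Complex.arg z)) (‖z‖) +
        (1 / (‖z‖) ^ 2) *
          deriv (deriv (fun t : ℝ =>
            g ((1 - ‖z‖) / ‖z‖) * h t)) (Complex.arg z) := by
  set v : ℂ → ℝ :=
    fun w : ℂ => g ((1 - ‖w‖) / ‖w‖) * h (Complex.arg w) with hvdef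
  set Uo : Set ℂ := {w : ℂ | 0 < ‖w‖ ∧ ‖w‖ < 1} with hUodef
  have hUo : IsOpen Uo := by
    have e : Uo = (fun w : ℂ => ‖w‖) ⁻¹' (Set.Ioo 0 1) := rfl
    rw [e]; exact isOpen_Ioo.preimage continuous_norm
  have hvC : ContDiffOn ℝ 2 v Uo := fun w hw =>
    (vContDiffAt hper hC2 hgC2 hw.1 hw.2).contDiffWithinAt
  have hC1 : ContDiffOn ℝ 1 (fderiv ℝ v) Uo := hvC.fderiv_of_isOpen hUo (by norm_num)
  have hvdiff : ∀ w ∈ Uo, DifferentiableAt ℝ v w := fun w hw =>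
    (hvC.differentiableOn two_ne_zero).differentiableAt (hUo.mem_nhds hw)
  have hHdiff : ∀ w ∈ Uo, DifferentiableAt ℝ (fderiv ℝ v) w := fun w hw =>
    (hC1.differentiableOn one_ne_zero).differentiableAt (hUo.mem_nhds hw)
  set r : ℝ := ‖z‖ with hrdef
  set θ : ℝ := Complex.arg z with hθdef
  have habs_path : ∀ s : ℝ, 0 < s → ∀ t : ℝ, ‖((0:ℂ) + (s:ℂ) * cE t)‖ = s := by
    intro s hs t
    rw [zero_add, norm_mul, Complex.norm_real, Real.norm_eq_abs, abs_of_pos hs, cE_norm, mul_one]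
  have hzeq : z = (0:ℂ) + (r:ℂ) * cE θ := by
    rw [zero_add]
    exact (Complex.norm_mul_exp_arg_mul_I z).symm
  have hpathmem : ∀ s : ℝ, 0 < s → s < 1 → ∀ t : ℝ, (0:ℂ) + (s:ℂ) * cE t ∈ Uo := by
    intro s hs hs1 t
    refine ⟨?_, ?_⟩ <;> rw [habs_path s hs t] <;> assumption
  have hzUo : z ∈ Uo := ⟨h0, h1⟩
  have hvpath : ∀ s : ℝ, 0 < s → ∀ t : ℝ,
      v ((0:ℂ) + (s:ℂ) * cE t) = g ((1 - s) / s) * h t := by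
    intro s hs t
    rw [hvdef]
    simp only
    rw [habs_path s hs t, zero_add, harg_eq hper hs t]
  -- radial first derivative
  have hveq_r : (fun s : ℝ => v ((0:ℂ) + (s:ℂ) * cE θ))
      =ᶠ[nhds r] (fun s : ℝ => g ((1 - s) / s) * h θ) := by
    filter_upwards [Ioo_mem_nhds h0 h1] with s hs
    exact hvpath s hs.1 θ
  have hDr : deriv (fun s : ℝ => g ((1 - s) / s) * h θ) r = fderiv ℝ v z (cE θ) := by
    rw [← hveq_r.deriv_eq]
    exact (L1 hzeq (hvdiff z hzUo)).deriv
  -- radial second derivative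
  have hev1 : deriv (fun s : ℝ => v ((0:ℂ) + (s:ℂ) * cE θ))
      =ᶠ[nhds r] (fun s : ℝ => (fderiv ℝ v ((0:ℂ) + (s:ℂ) * cE θ)) (cE θ)) := by
    filter_upwards [Ioo_mem_nhds h0 h1] with s hs
    exact (L1 rfl (hvdiff _ (hpathmem s hs.1 hs.2 θ))).deriv
  have hDrr : deriv (deriv (fun s : ℝ => g ((1 - s) / s) * h θ)) r
      = (fderiv ℝ (fderiv ℝ v) z (cE θ)) (cE θ) := by
    have e1 := hveq_r.symm.deriv
    rw [(e1.trans hev1).deriv_eq]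
    exact (L2 hzeq (hHdiff z hzUo)).deriv
  -- angular second derivative
  have hveq_t : (fun t : ℝ => g ((1 - r) / r) * h t)
      = fun t : ℝ => v ((0:ℂ) + (r:ℂ) * cE t) := by
    funext t
    exact (hvpath r h0 t).symm
  have hGder : ∀ t : ℝ, HasDerivAt (fun t : ℝ => v ((0:ℂ) + (r:ℂ) * cE t))
      (r * (fderiv ℝ v ((0:ℂ) + (r:ℂ) * cE t)) (Complex.I * cE t)) t := by
    intro t
    have hD := L3 (c := (0:ℂ)) (r := r) (θ := t) rfl (hvdiff _ (hpathmem r h0 h1 t))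
    have e : ((r : ℂ) * (cE t * Complex.I)) = r • (Complex.I * cE t) := by
      rw [Complex.real_smul]; ring
    rw [e, _root_.map_smul] at hD
    simpa [smul_eq_mul] using hD
  have hdtheta_fun : deriv (fun t : ℝ => v ((0:ℂ) + (r:ℂ) * cE t))
      = fun t => r * (fderiv ℝ v ((0:ℂ) + (r:ℂ) * cE t)) (Complex.I * cE t) :=
    funext fun t => (hGder t).deriv
  have hG'θ : HasDerivAt
      (fun t : ℝ => (fderiv ℝ v ((0:ℂ) + (r:ℂ) * cE t)) (Complex.I * cE t))
      (r * (fderiv ℝ (fderiv ℝ v) z (Complex.I * cE θ)) (Complex.I * cE θ)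
        - fderiv ℝ v z (cE θ)) θ := by
    have hD := L4 hzeq (hHdiff z hzUo) (hvdiff z hzUo)
    have e1 : ((r : ℂ) * (cE θ * Complex.I)) = r • (Complex.I * cE θ) := by
      rw [Complex.real_smul]; ring
    have e2 : Complex.I * (cE θ * Complex.I) = -cE θ := by
      rw [mul_comm (cE θ) Complex.I, ← mul_assoc, Complex.I_mul_I]; ring
    rw [e1, e2, _root_.map_smul, map_neg] at hD
    simpa [ContinuousLinearMap.smul_apply, smul_eq_mul, sub_eq_add_neg] using hD
  have hDtt : deriv (deriv (fun t : ℝ => g ((1 - r) / r) * h t)) θ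
      = r * (r * (fderiv ℝ (fderiv ℝ v) z (Complex.I * cE θ)) (Complex.I * cE θ)
        - fderiv ℝ v z (cE θ)) := by
    rw [hveq_t, hdtheta_fun]
    exact (hG'θ.const_mul r).deriv
  have hlapz : lap v z = (fderiv ℝ (fderiv ℝ v) z (cE θ)) (cE θ)
      + (fderiv ℝ (fderiv ℝ v) z (Complex.I * cE θ)) (Complex.I * cE θ) := by
    rw [lap_eq_H (hHdiff z hzUo), ← rot (fderiv ℝ (fderiv ℝ v) z) θ]
  rw [hDrr, hDr, hDtt, hlapz]
  have hrne : r ≠ 0 := ne_of_gt h0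
  field_simp
  ring


section
variable {h g : ℝ → ℝ}

lemma bullet2 {ρ : ℝ} (hρ : 0 < ρ) (hpos : ∀ θ, 0 ≤ h θ) (htc : TrigConvex ρ h)
    (hC2 : ContDiff ℝ 2 h) (hconv : ConvexOn ℝ (Set.Ici (0:ℝ)) g)
    (hgpos : ∀ x, 0 ≤ x → 0 ≤ g x) (hg0 : g 0 = 0)
    (hgC2 : ContDiffOn ℝ 2 g (Set.Ioi (0:ℝ))) :
    ∀ r ∈ Set.Ioo (0 : ℝ) 1, ∀ θ : ℝ,
      (1 / r ^ 2) * (1 / (1 - r) - ρ ^ 2) * g ((1 - r) / r) * h θ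
        ≤ deriv (deriv (fun s : ℝ => g ((1 - s) / s) * h θ)) r +
            (1 / r) * deriv (fun s : ℝ => g ((1 - s) / s) * h θ) r +
            (1 / r ^ 2) * deriv (deriv (fun t : ℝ => g ((1 - r) / r) * h t)) θ := by
  rintro r ⟨hr, hr1⟩ θ
  rw [bullet1 hC2 hgC2 r ⟨hr, hr1⟩ θ]
  have h1r : (0:ℝ) < 1 - r := by linarith
  set x : ℝ := 1 / r - 1 with hxdef
  have hxpos : 0 < x := by rw [hxdef, sub_pos, lt_div_iff₀ hr]; linarith
  have hx_mul : x * r = 1 - r := by rw [hxdef]; field_simp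
  have hwe : (1 - r) / r = x := by rw [hxdef]; field_simp
  rw [hwe]
  set a : ℝ := h θ with hadef
  set b : ℝ := deriv (deriv h) θ with hbdef
  have ha : 0 ≤ a := hpos θ
  have hgx : 0 ≤ g x := hgpos x hxpos.le
  have hb : -(ρ ^ 2) * a ≤ b := by
    have := trig_second_deriv_nonneg hρ htc hC2 θ
    rw [← hadef, ← hbdef] at this; linarith
  have hg1 : g x ≤ x * deriv g x := g_slope_le hconv hg0 hgC2 hxpos
  have hg2 : 0 ≤ deriv (deriv g) x := g_deriv2_nonneg hconv hgC2 hxpos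
  have hstep : r ^ 2 * g x * a - r ^ 2 * (1 - r) * ρ ^ 2 * g x * a
      ≤ (1 - r) * deriv (deriv g) x * a + r * (1 - r) * deriv g x * a
        + r ^ 2 * (1 - r) * (g x * b) := by
    have t1 : 0 ≤ (1 - r) * deriv (deriv g) x * a :=
      mul_nonneg (mul_nonneg h1r.le hg2) ha
    have t2 : r ^ 2 * g x * a ≤ r * (1 - r) * deriv g x * a := by
      have e : r * (1 - r) * deriv g x = r ^ 2 * (x * deriv g x) := by
        rw [← hx_mul]; ring
      rw [e]
      exact mul_le_mul_of_nonneg_right (mul_le_mul_of_nonneg_left hg1 (by positivity)) ha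
    have t3 : -(r ^ 2 * (1 - r) * ρ ^ 2 * g x * a) ≤ r ^ 2 * (1 - r) * (g x * b) := by
      have hc : (0:ℝ) ≤ r ^ 2 * (1 - r) * g x := by positivity
      have := mul_le_mul_of_nonneg_left hb hc
      nlinarith [this]
    linarith
  have hpos4 : (0:ℝ) < r ^ 4 * (1 - r) := by positivity
  rw [← mul_le_mul_iff_left₀ hpos4]
  have e1 : (1 / r ^ 2) * (1 / (1 - r) - ρ ^ 2) * g x * a * (r ^ 4 * (1 - r))
      = r ^ 2 * g x * a - r ^ 2 * (1 - r) * ρ ^ 2 * g x * a := by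
    field_simp
  have e2 : ((deriv (deriv g) x / r ^ 4 + deriv g x / r ^ 3) * a
        + (1 / r ^ 2) * g x * b) * (r ^ 4 * (1 - r))
      = (1 - r) * deriv (deriv g) x * a + r * (1 - r) * deriv g x * a
        + r ^ 2 * (1 - r) * (g x * b) := by
    field_simp
  rw [e1, e2]
  exact hstep
end

/-- For `ρ > 0`, a nonnegative `2π`-periodic `ρ`-trigonometrically convex
`h` of class `C²`, and a convex `g : ℝ⁺ → ℝ⁺` with `g 0 = 0` of class `C²` on `(0,∞)`,
the polar Laplacian `Δv = ∂²v/∂r² + (1/r)∂v/∂r + (1/r²)∂²v/∂θ²` of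
`v(re^{iθ}) = g((1-r)/r) h(θ)` equals
`(g''(1/r-1)/r⁴ + g'(1/r-1)/r³) h(θ) + (1/r²) g(1/r-1) h''(θ)`, is bounded below by
`(1/r²)(1/(1-r) - ρ²) g((1-r)/r) h(θ)`, and consequently `v` is subharmonic on the
annulus `{max {1/2, 1-1/ρ²} < |z| < 1}`. -/
theorem polar_laplacian_formula (ρ : ℝ) (hρ : 0 < ρ)
    (h : ℝ → ℝ) (hper : Function.Periodic h (2 * Real.pi)) (hpos : ∀ θ, 0 ≤ h θ)
    (htc : TrigConvex ρ h) (hC2 : ContDiff ℝ 2 h)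
    (g : ℝ → ℝ) (hconv : ConvexOn ℝ (Set.Ici (0 : ℝ)) g) (hgpos : ∀ x, 0 ≤ x → 0 ≤ g x)
    (hg0 : g 0 = 0) (hgC2 : ContDiffOn ℝ 2 g (Set.Ioi (0 : ℝ))) :
    (∀ r ∈ Set.Ioo (0 : ℝ) 1, ∀ θ : ℝ,
      deriv (deriv (fun s : ℝ => g ((1 - s) / s) * h θ)) r +
          (1 / r) * deriv (fun s : ℝ => g ((1 - s) / s) * h θ) r +
          (1 / r ^ 2) * deriv (deriv (fun t : ℝ => g ((1 - r) / r) * h t)) θ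
        = (deriv (deriv g) (1 / r - 1) / r ^ 4 + deriv g (1 / r - 1) / r ^ 3) * h θ +
            (1 / r ^ 2) * g (1 / r - 1) * deriv (deriv h) θ) ∧
    (∀ r ∈ Set.Ioo (0 : ℝ) 1, ∀ θ : ℝ,
      (1 / r ^ 2) * (1 / (1 - r) - ρ ^ 2) * g ((1 - r) / r) * h θ
        ≤ deriv (deriv (fun s : ℝ => g ((1 - s) / s) * h θ)) r +
            (1 / r) * deriv (fun s : ℝ => g ((1 - s) / s) * h θ) r +
            (1 / r ^ 2) * deriv (deriv (fun t : ℝ => g ((1 - r) / r) * h t)) θ) ∧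
    SubharmonicOn (fun z : ℂ => g ((1 - ‖z‖) / ‖z‖) * h (Complex.arg z))
      {z : ℂ | max (1/2) (1 - 1/ρ^2) < ‖z‖ ∧ ‖z‖ < 1} := by
  refine ⟨bullet1 hC2 hgC2, bullet2 hρ hpos htc hC2 hconv hgpos hg0 hgC2, ?_⟩
  set v : ℂ → ℝ :=
    fun z : ℂ => g ((1 - ‖z‖) / ‖z‖) * h (Complex.arg z) with hvdef
  set a : ℝ := max (1/2) (1 - 1/ρ^2) with hadef
  have ha2 : (1/2 : ℝ) ≤ a := le_max_left _ _
  have ha3 : 1 - 1/ρ^2 ≤ a := le_max_right _ _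
  set Uann : Set ℂ := {z : ℂ | a < ‖z‖ ∧ ‖z‖ < 1} with hUann_def
  have hUann : IsOpen Uann := by
    have e : Uann = (fun w : ℂ => ‖w‖) ⁻¹' (Set.Ioo a 1) := rfl
    rw [e]; exact isOpen_Ioo.preimage continuous_norm
  have hmem : ∀ z ∈ Uann, 0 < ‖z‖ ∧ ‖z‖ < 1 := by
    intro z hz
    exact ⟨by have := hz.1; linarith, hz.2⟩
  have hvC : ContDiffOn ℝ 2 v Uann := fun z hz =>
    (vContDiffAt hper hC2 hgC2 (hmem z hz).1 (hmem z hz).2).contDiffWithinAt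
  have hlapnn : ∀ w ∈ Uann, 0 ≤ lap v w := by
    intro w hw
    obtain ⟨hw0, hw1⟩ := hmem w hw
    rw [hvdef, lap_v hper hC2 hgC2 hw0 hw1]
    refine le_trans ?_
      (bullet2 hρ hpos htc hC2 hconv hgpos hg0 hgC2 (‖w‖) ⟨hw0, hw1⟩
        (Complex.arg w))
    set r : ℝ := ‖w‖
    have h1r : (0:ℝ) < 1 - r := by linarith
    have hρ2pos : (0:ℝ) < ρ^2 := by positivity
    have hfac : (0:ℝ) ≤ 1 / (1 - r) - ρ ^ 2 := by
      have hx : 1 - r < 1/ρ^2 := by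
        have := hw.1; linarith
      have : ρ^2 * (1 - r) < ρ^2 * (1/ρ^2) := mul_lt_mul_of_pos_left hx hρ2pos
      have h2 : ρ^2 * (1/ρ^2) = 1 := by field_simp
      rw [h2] at this
      have := (le_div_iff₀ h1r).mpr this.le
      linarith [this]
    apply mul_nonneg (mul_nonneg (mul_nonneg (by positivity) hfac) ?_) (hpos _)
    exact hgpos _ (div_nonneg h1r.le hw0.le)
  constructor
  · exact hvC.continuousOn.upperSemicontinuousOn
  · intro z hz R hR hball
    exact submean hUann hvC hlapnn hR hball
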